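/- (4.8(a), case q = 1.) Suppose v_1, …, v_σ ∈ V satisfy: B(v_r, T^k v_t) = 0 for all t < r and −p_t ≤ k ≤ p_t − 2; B(v_r, T^k v_r) = 0 for −p_r + 1 ≤ k ≤ p_r − 2; and B(v_r, T^{p_r−1} v_r) ≠ 0, for every r ∈ {1,…,σ}. Then the n vectors T^{h−p_k} v_k, for k ∈ {1,…,σ} and 0 ≤ h ≤ 2p_k − 2, form a basis of V. -/

import Mathlib

open Module

/-- 4.8(a), case `q = 1`: if `v₁,…,v_σ` satisfy the 𝒮-conditions (with
`B(v_r, T^{p_r−1} v_r) ≠ 0`), then the `n` vectors `T^{h−p_k} v_k`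
(`1 ≤ k ≤ σ`, `0 ≤ h ≤ 2p_k−2`) form a basis of `V`. -/
theorem S_conditions_family_is_basis
    (𝕜 : Type*) [Field 𝕜] [IsAlgClosed 𝕜]
    (V : Type*) [AddCommGroup V] [Module 𝕜 V] [FiniteDimensional 𝕜 V]
    (σ n : ℕ) (p : ℕ → ℕ)
    (hσ : 1 ≤ σ) (hn1 : 1 ≤ n)
    (hp1 : ∀ r, 1 ≤ r → r ≤ σ → 1 ≤ p r)
    (hmono : ∀ r, 1 ≤ r → r < σ → p (r + 1) ≤ p r)
    (hn : n = ∑ r ∈ Finset.Icc 1 σ, (2 * p r - 1))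
    (hdimV : finrank 𝕜 V = n)
    (B : V →ₗ[𝕜] V →ₗ[𝕜] 𝕜)
    (hBl : ∀ x, (∀ y, B x y = 0) → x = 0)
    (hBr : ∀ y, (∀ x, B x y = 0) → y = 0)
    (T : V ≃ₗ[𝕜] V)
    (hT : ∀ x y, B (T x) y = B y x)
    (v : ℕ → V)
    (hS1 : ∀ r ∈ Finset.Icc 1 σ, ∀ t ∈ Finset.Icc 1 σ, t < r →
      ∀ m : ℤ, -(p t : ℤ) ≤ m → m ≤ (p t : ℤ) - 2 → B (v r) ((T ^ m) (v t)) = 0)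
    (hS2 : ∀ r ∈ Finset.Icc 1 σ, ∀ m : ℤ, -(p r : ℤ) + 1 ≤ m → m ≤ (p r : ℤ) - 2 →
      B (v r) ((T ^ m) (v r)) = 0)
    (hS3 : ∀ r ∈ Finset.Icc 1 σ, B (v r) ((T ^ ((p r : ℤ) - 1)) (v r)) ≠ 0) :
    LinearIndependent 𝕜
      (fun kh : Σ k : Fin σ, Fin (2 * p (k.1 + 1) - 1) =>
        (T ^ ((kh.2 : ℤ) - (p (kh.1.1 + 1) : ℤ))) (v (kh.1.1 + 1))) ∧
    Submodule.span 𝕜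
      (Set.range (fun kh : Σ k : Fin σ, Fin (2 * p (k.1 + 1) - 1) =>
        (T ^ ((kh.2 : ℤ) - (p (kh.1.1 + 1) : ℤ))) (v (kh.1.1 + 1)))) = ⊤ := by
  classical
  -- power manipulation lemmas
  have hmul : ∀ (a b : ℤ) (x : V), (T ^ a) ((T ^ b) x) = (T ^ (a + b)) x := by
    intro a b x
    rw [zpow_add]
    rfl
  have hone : ∀ x : V, (T ^ (0 : ℤ)) x = x := by
    intro x; rw [zpow_zero]; rfl
  have hstep : ∀ (m : ℤ) (x : V), (T ^ (m + 1)) x = T ((T ^ m) x) := by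
    intro m x
    have h1 := hmul 1 m x
    rw [zpow_one] at h1
    rw [h1, add_comm 1 m]
  have hTT : ∀ x y, B (T x) (T y) = B x y := fun x y => (hT x (T y)).trans (hT y x)
  have hiso : ∀ (m : ℤ), ∀ x y : V, B ((T ^ m) x) ((T ^ m) y) = B x y := by
    intro m
    induction m using Int.induction_on with
    | zero => intro x y; rw [hone, hone]
    | succ k ih =>
      intro x y
      rw [hstep, hstep, hTT]
      exact ih x y
    | pred k ih =>
      intro x y
      have h2 := hTT ((T ^ (-(k : ℤ) - 1)) x) ((T ^ (-(k : ℤ) - 1)) y)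
      rw [← hstep, ← hstep] at h2
      rw [show (-(k : ℤ) - 1) + 1 = -(k : ℤ) from by ring] at h2
      exact h2.symm.trans (ih x y)
  have hpair : ∀ (a m : ℤ) (x y : V), B ((T ^ a) x) ((T ^ (a + m)) y) = B x ((T ^ m) y) := by
    intro a m x y
    rw [← hmul a m y]
    exact hiso a x ((T ^ m) y)
  have hswap : ∀ (m : ℤ) (x y : V), B x ((T ^ m) y) = B y ((T ^ (-m - 1)) x) := by
    intro m x y
    have h1 : B (T ((T ^ m) y)) x = B x ((T ^ m) y) := hT _ x
    rw [← h1, ← hstep m y]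
    have h2 := hpair (m + 1) (-m - 1) y x
    rw [show (m + 1) + (-m - 1) = (0 : ℤ) from by ring] at h2
    rw [hone] at h2
    exact h2
  -- antitonicity of p
  have hanti : ∀ b, b ≤ σ → ∀ a, 1 ≤ a → a ≤ b → p b ≤ p a := by
    intro b
    induction b with
    | zero => intro _ a ha hab; exact absurd hab (by omega)
    | succ b ih =>
      intro hb a ha hab
      rcases Nat.lt_or_ge a (b + 1) with h | h
      · have h1 : p (b + 1) ≤ p b := hmono b (by omega) (by omega)
        exact h1.trans (ih (by omega) a ha (by omega))
      · have hab' : a = b + 1 := by omega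
        rw [hab']
  -- linear independence
  have hli : LinearIndependent 𝕜
      (fun kh : Σ k : Fin σ, Fin (2 * p (k.1 + 1) - 1) =>
        (T ^ ((kh.2 : ℤ) - (p (kh.1.1 + 1) : ℤ))) (v (kh.1.1 + 1))) := by
    rw [Fintype.linearIndependent_iff]
    intro g hg
    suffices H : ∀ N, ∀ i : Σ k : Fin σ, Fin (2 * p (k.1 + 1) - 1),
        (i.2 : ℕ) * σ + (σ - 1 - (i.1 : ℕ)) < N → g i = 0 by
      exact fun i => H _ i (Nat.lt_succ_self _)
    intro N
    induction N with
    | zero => exact fun i hi => absurd hi (Nat.not_lt_zero _)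
    | succ N IH =>
      rintro ⟨⟨k, hk⟩, ⟨h₂, hh₂⟩⟩ hi
      have hi' : h₂ * σ + (σ - 1 - k) < N + 1 := hi
      have hrmem : k + 1 ∈ Finset.Icc 1 σ := by rw [Finset.mem_Icc]; omega
      have hpr : 1 ≤ p (k + 1) := hp1 _ (by omega) (by omega)
      have hh₂' : h₂ < 2 * p (k + 1) - 1 := hh₂
      -- pair the relation with y ↦ B (v (k+1)) (T^(-h₂) y)
      have h1 := congrArg (fun z : V => B (v (k + 1)) ((T ^ (-(h₂ : ℤ))) z)) hg
      simp only [map_sum, map_smul, map_zero, smul_eq_mul] at h1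
      simp only [hmul] at h1
      have h0 : ∑ j : Σ k : Fin σ, Fin (2 * p (k.1 + 1) - 1),
          g j * B (v (k + 1))
            ((T ^ (-(h₂ : ℤ) + ((j.2 : ℤ) - (p (j.1.1 + 1) : ℤ)))) (v (j.1.1 + 1))) = 0 := h1
      -- all the other terms vanish
      have hothers : ∀ j : Σ k : Fin σ, Fin (2 * p (k.1 + 1) - 1), j ∈ Finset.univ →
          j ≠ (⟨⟨k, hk⟩, ⟨h₂, hh₂⟩⟩ : Σ k : Fin σ, Fin (2 * p (k.1 + 1) - 1)) →
          g j * B (v (k + 1))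
            ((T ^ (-(h₂ : ℤ) + ((j.2 : ℤ) - (p (j.1.1 + 1) : ℤ)))) (v (j.1.1 + 1))) = 0 := by
        rintro ⟨⟨k', hk'⟩, ⟨h', hh'⟩⟩ - hne
        have hpt : 1 ≤ p (k' + 1) := hp1 _ (by omega) (by omega)
        have htmem : k' + 1 ∈ Finset.Icc 1 σ := by rw [Finset.mem_Icc]; omega
        have hh'' : h' < 2 * p (k' + 1) - 1 := hh'
        by_cases hsm : h' < h₂ ∨ (h' = h₂ ∧ k < k')
        · have hg0 : g ⟨⟨k', hk'⟩, ⟨h', hh'⟩⟩ = 0 := by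
            apply IH
            show h' * σ + (σ - 1 - k') < N
            rcases hsm with hlt | ⟨heq, hkk⟩
            · have hm : (h' + 1) * σ ≤ h₂ * σ := Nat.mul_le_mul_right σ (by omega)
              have hm' : h' * σ + σ ≤ h₂ * σ := by rw [Nat.succ_mul] at hm; exact hm
              omega
            · subst heq; omega
          rw [hg0, zero_mul]
        · push_neg at hsm
          obtain ⟨hge, himp⟩ := hsm
          have hB0 : B (v (k + 1))
              ((T ^ (-(h₂ : ℤ) + ((h' : ℤ) - (p (k' + 1) : ℤ)))) (v (k' + 1))) = 0 := by
            rcases Nat.lt_trichotomy k' k with hlt | heqk | hgt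
            · exact hS1 (k + 1) hrmem (k' + 1) htmem (by omega) _ (by omega) (by omega)
            · subst heqk
              have hne' : h' ≠ h₂ := by
                intro hE
                apply hne
                subst hE
                rfl
              exact hS2 (k' + 1) htmem _ (by omega) (by omega)
            · have hple : p (k' + 1) ≤ p (k + 1) :=
                hanti (k' + 1) (by omega) (k + 1) (by omega) (by omega)
              have hne2 : h' ≠ h₂ := fun hE => by have := himp hE; omega
              rw [hswap]
              exact hS1 (k' + 1) htmem (k + 1) hrmem (by omega) _ (by omega) (by omega)
          show g (⟨⟨k', hk'⟩, ⟨h', hh'⟩⟩ : Σ k : Fin σ, Fin (2 * p (k.1 + 1) - 1)) *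
            B (v (k + 1))
              ((T ^ (-(h₂ : ℤ) + ((h' : ℤ) - (p (k' + 1) : ℤ)))) (v (k' + 1))) = 0
          rw [hB0, mul_zero]
      have hsingle := Finset.sum_eq_single_of_mem
        (⟨⟨k, hk⟩, ⟨h₂, hh₂⟩⟩ : Σ k : Fin σ, Fin (2 * p (k.1 + 1) - 1))
        (Finset.mem_univ _) hothers
      rw [hsingle] at h0
      have hfinal : g (⟨⟨k, hk⟩, ⟨h₂, hh₂⟩⟩ : Σ k : Fin σ, Fin (2 * p (k.1 + 1) - 1)) *
          B (v (k + 1))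
            ((T ^ (-(h₂ : ℤ) + ((h₂ : ℤ) - (p (k + 1) : ℤ)))) (v (k + 1))) = 0 := h0
      rw [show -(h₂ : ℤ) + ((h₂ : ℤ) - (p (k + 1) : ℤ)) = -(p (k + 1) : ℤ) from by ring]
        at hfinal
      have hnz : B (v (k + 1)) ((T ^ (-(p (k + 1) : ℤ))) (v (k + 1))) ≠ 0 := by
        have h3 := hS3 (k + 1) hrmem
        rw [hswap ((p (k + 1) : ℤ) - 1) (v (k + 1)) (v (k + 1))] at h3
        rw [show -((p (k + 1) : ℤ) - 1) - 1 = -(p (k + 1) : ℤ) from by ring] at h3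
        exact h3
      exact (mul_eq_zero.mp hfinal).resolve_right hnz
  refine ⟨hli, ?_⟩
  have hcard : Fintype.card (Σ k : Fin σ, Fin (2 * p (k.1 + 1) - 1)) = n := by
    rw [Fintype.card_sigma]
    simp only [Fintype.card_fin]
    rw [hn, ← Finset.Ico_add_one_right_eq_Icc, Finset.sum_Ico_eq_sum_range,
      Fin.sum_univ_eq_sum_range (fun j => 2 * p (j + 1) - 1) σ]
    exact Finset.sum_congr (by norm_num) (fun i _ => by rw [Nat.add_comm i 1])
  exact hli.span_eq_top_of_card_eq_finrank' (hcard.trans hdimV.symm)
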